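/- Let 3/4 < p < 1. Then for x ∈ [0,1], f_p(x) = x if and only if x = 0, or x = (1 - √(4p-3))/(2p), or x = (1 + √(4p-3))/(2p); moreover all three of these values lie in [0,1]. -/

import Mathlib

noncomputable def f (p x : ℝ) : ℝ := p * x / (1 - p * x + (p * x) ^ 2)

/-- for 3/4 < p < 1, the fixed points of f_p in [0,1] are
0, (1 - √(4p-3))/(2p) and (1 + √(4p-3))/(2p), all of which lie in [0,1]. -/
theorem fixed_points_large_p (p : ℝ) (hp : 3/4 < p) (hp1 : p < 1) :
    (∀ x ∈ Set.Icc (0:ℝ) 1,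
      (f p x = x ↔ x = 0 ∨ x = (1 - Real.sqrt (4*p - 3)) / (2*p)
        ∨ x = (1 + Real.sqrt (4*p - 3)) / (2*p)))
    ∧ (0:ℝ) ∈ Set.Icc (0:ℝ) 1
    ∧ (1 - Real.sqrt (4*p - 3)) / (2*p) ∈ Set.Icc (0:ℝ) 1
    ∧ (1 + Real.sqrt (4*p - 3)) / (2*p) ∈ Set.Icc (0:ℝ) 1 := by
  have h3 : (0:ℝ) ≤ 4*p - 3 := by linarith
  have hp0 : (0:ℝ) < p := by linarith
  have hs0 : 0 ≤ Real.sqrt (4*p - 3) := Real.sqrt_nonneg _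
  have hs2 : Real.sqrt (4*p - 3) ^ 2 = 4*p - 3 := Real.sq_sqrt h3
  set s := Real.sqrt (4*p - 3) with hs
  have hs1 : s < 1 := by nlinarith
  have hsle : s ≤ 2*p - 1 := by nlinarith [sq_nonneg (p - 1)]
  have hD : ∀ x : ℝ, 0 < 1 - p * x + (p * x) ^ 2 := by
    intro x; nlinarith [sq_nonneg (2*(p*x) - 1)]
  refine ⟨?_, ⟨le_refl 0, by norm_num⟩, ?_, ?_⟩
  · intro x hx
    constructor
    · intro hfx
      have key : p * x = x * (1 - p * x + (p * x) ^ 2) := by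
        rw [f, div_eq_iff (hD x).ne'] at hfx
        linarith [hfx]
      have h4 : x * ((2*p*x - 1 - s) * (2*p*x - 1 + s)) = 0 := by
        linear_combination (-4 : ℝ) * key - x * hs2
      rcases mul_eq_zero.mp h4 with h | h
      · exact Or.inl h
      rcases mul_eq_zero.mp h with h | h
      · right; right; field_simp; linarith
      · right; left; field_simp; linarith
    · intro h
      rcases h with h | h | h <;> subst h <;>
        rw [f, div_eq_iff (hD _).ne']
      · ring
      · field_simp
        linear_combination (s - 1) * hs2
      · field_simp
        linear_combination (-1 : ℝ) * hs2
  · constructor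
    · apply div_nonneg _ (by linarith); linarith
    · rw [div_le_one (by linarith)]; linarith
  · constructor
    · apply div_nonneg _ (by linarith); linarith
    · rw [div_le_one (by linarith)]; linarith
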